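/- Let p ∈ (0,1) and define, for δ ≥ 4(1-p), the function S₁(δ) = 1/δ - p(1 - √(1 - 4(1-p)/δ))/(2(1-p)). Then for all δ ≥ 4(1-p) one has S₁(δ) ≤ (1-p)/4, with equality if and only if δ = 4/(p+1); moreover 4/(p+1) ≥ 4(1-p), so the maximizer lies in the domain. -/

import Mathlib

/-- the fraction of informed individuals `S₁(δ)` at the stable endemic
equilibrium of the permanent adoption model is at most `(1-p)/4` on its domain
`δ ≥ 4(1-p)`, with equality exactly at `δ = 4/(p+1)`, which lies in the domain. -/
theorem stmt_9 (p : ℝ) (hp : p ∈ Set.Ioo (0:ℝ) 1) :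
    let S₁ : ℝ → ℝ := fun δ =>
      1 / δ - p * (1 - Real.sqrt (1 - 4 * (1 - p) / δ)) / (2 * (1 - p))
    (∀ δ : ℝ, 4 * (1 - p) ≤ δ → S₁ δ ≤ (1 - p) / 4) ∧
    (∀ δ : ℝ, 4 * (1 - p) ≤ δ → (S₁ δ = (1 - p) / 4 ↔ δ = 4 / (p + 1))) ∧
    4 * (1 - p) ≤ 4 / (p + 1) := by
  obtain ⟨hp0, hp1⟩ := hp
  intro S₁
  have h1p : (0:ℝ) < 1 - p := by linarith
  have key : ∀ δ : ℝ, 4 * (1 - p) ≤ δ →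
      S₁ δ - (1 - p) / 4
        = -(Real.sqrt (1 - 4 * (1 - p) / δ) - p) ^ 2 / (4 * (1 - p)) := by
    intro δ hδ
    have hδ0 : (0:ℝ) < δ := by linarith
    have hnn : 0 ≤ 1 - 4 * (1 - p) / δ := by
      have : 4 * (1 - p) / δ ≤ 1 := by
        rw [div_le_one hδ0]; linarith
      linarith
    have hs : (Real.sqrt (1 - 4 * (1 - p) / δ)) ^ 2 = 1 - 4 * (1 - p) / δ :=
      Real.sq_sqrt hnn
    show 1 / δ - p * (1 - Real.sqrt (1 - 4 * (1 - p) / δ)) / (2 * (1 - p)) - (1 - p) / 4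
        = -(Real.sqrt (1 - 4 * (1 - p) / δ) - p) ^ 2 / (4 * (1 - p))
    have hδi : 1 / δ = (1 - (Real.sqrt (1 - 4 * (1 - p) / δ)) ^ 2) / (4 * (1 - p)) := by
      rw [hs]
      field_simp
      ring
    generalize Real.sqrt (1 - 4 * (1 - p) / δ) = s at hδi ⊢
    rw [hδi]
    field_simp
    ring
  refine ⟨?_, ?_, ?_⟩
  · intro δ hδ
    have hk := key δ hδ
    have hsq : 0 ≤ (Real.sqrt (1 - 4 * (1 - p) / δ) - p) ^ 2 := sq_nonneg _
    have hpos : 0 < 4 * (1 - p) := by linarith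
    rw [neg_div] at hk
    linarith [div_nonneg hsq hpos.le]
  · intro δ hδ
    have hk := key δ hδ
    have hδ0 : (0:ℝ) < δ := by linarith
    have hnn : 0 ≤ 1 - 4 * (1 - p) / δ := by
      have : 4 * (1 - p) / δ ≤ 1 := by rw [div_le_one hδ0]; linarith
      linarith
    constructor
    · intro he
      rw [he, sub_self, neg_div, eq_comm, neg_eq_zero, div_eq_zero_iff] at hk
      have h4 : (4 * (1 - p)) ≠ 0 := by positivity
      have hz : (Real.sqrt (1 - 4 * (1 - p) / δ) - p) ^ 2 = 0 := hk.resolve_right h4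
      have hsp : Real.sqrt (1 - 4 * (1 - p) / δ) = p := by
        have := pow_eq_zero_iff (n := 2) (two_ne_zero) |>.mp hz
        linarith
      have harg : 1 - 4 * (1 - p) / δ = p ^ 2 := by
        rw [← Real.sq_sqrt hnn, hsp]
      have hδne : δ ≠ 0 := ne_of_gt hδ0
      have hp1' : p + 1 ≠ 0 := by linarith
      field_simp at harg ⊢
      nlinarith [harg]
    · intro he
      subst he
      have hp1' : (0:ℝ) < p + 1 := by linarith
      have harg : 1 - 4 * (1 - p) / (4 / (p + 1)) = p ^ 2 := by
        field_simp
        ring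
      rw [harg, Real.sqrt_sq hp0.le, sub_self] at hk
      simpa using sub_eq_zero.mp (by simpa using hk)
  · rw [le_div_iff₀ (by linarith : (0:ℝ) < p + 1)]
    nlinarith
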